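/- arXiv:1805.06992 — 2 statements merged into one kernel-verified Lean document; each statement's English description precedes it below -/
import Mathlib

section
/- Let G=(V,E) be a finite acyclic digraph and let T ⊆ V×V be a set of additional edges disjoint from E such that for every pair of distinct vertices u,v ∈ V, at least one of (u,v) or (v,u) belongs to E∪T. Then for every maximal child C of (G,T), the reachability relation of C (u is related to v iff there is a nonempty directed path from u to v in C) is a strict total order on V. Consequently C has a unique topological ordering. -/
/-- `u` reaches `v`: there is a nonempty directed path from `u` to `v` using edges in `E`. -/
def reaches {V : Type*} (E : Set (V × V)) (u v : V) : Prop :=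
  Relation.TransGen (fun a b => (a, b) ∈ E) u v

/-- A digraph (with edge set `E`) is acyclic if no vertex reaches itself. -/
def Acyclic {V : Type*} (E : Set (V × V)) : Prop := ∀ v, ¬ reaches E v v

/-- A digraph contains a directed cycle if some vertex reaches itself. -/
def HasCycle {V : Type*} (E : Set (V × V)) : Prop := ∃ v, reaches E v v

/-- `(V, E ∪ T')` is a maximal child of `((V,E), T)`. -/
def IsMaxChild {V : Type*} (E T T' : Set (V × V)) : Prop :=
  T' ⊆ T ∧ Acyclic (E ∪ T') ∧ ∀ e ∈ T \ T', HasCycle (insert e (E ∪ T'))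

/-- `l` is a topological ordering of the digraph with edge set `E`: it lists every
vertex exactly once, and the tail of every edge appears before its head. -/
def IsTopOrder {V : Type*} [DecidableEq V] (E : Set (V × V)) (l : List V) : Prop :=
  l.Nodup ∧ (∀ v : V, v ∈ l) ∧ ∀ e ∈ E, l.idxOf e.1 < l.idxOf e.2

lemma split_lemma {V : Type*} (C : Set (V × V)) (u v a b : V)
    (h : Relation.TransGen (fun x y => (x, y) ∈ insert (u, v) C) a b) :
    Relation.TransGen (fun x y => (x, y) ∈ C) a b ∨
      (Relation.ReflTransGen (fun x y => (x, y) ∈ C) a u ∧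
       Relation.ReflTransGen (fun x y => (x, y) ∈ C) v b) := by
  induction h with
  | single h =>
    rcases Set.mem_insert_iff.1 h with h | h
    · rcases Prod.mk.injEq .. ▸ h with ⟨rfl, rfl⟩
      exact Or.inr ⟨Relation.ReflTransGen.refl, Relation.ReflTransGen.refl⟩
    · exact Or.inl (Relation.TransGen.single h)
  | tail hab hbc ih =>
    rcases Set.mem_insert_iff.1 hbc with h | h
    · rcases Prod.mk.injEq .. ▸ h with ⟨rfl, rfl⟩
      rcases ih with ih | ⟨ih1, _⟩
      · exact Or.inr ⟨ih.to_reflTransGen, Relation.ReflTransGen.refl⟩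
      · exact Or.inr ⟨ih1, Relation.ReflTransGen.refl⟩
    · rcases ih with ih | ⟨ih1, ih2⟩
      · exact Or.inl (ih.tail h)
      · exact Or.inr ⟨ih1, ih2.tail h⟩

lemma pairwise_of_indexOf {V : Type*} [DecidableEq V] {q : V → V → Prop} {l : List V}
    (hp : List.Pairwise q l) {x y : V} (hx : x ∈ l) (hy : y ∈ l)
    (h : l.idxOf x < l.idxOf y) : q x y := by
  have hx' : l.idxOf x < l.length := List.idxOf_lt_length_iff.2 hx
  have hy' : l.idxOf y < l.length := List.idxOf_lt_length_iff.2 hy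
  have := List.pairwise_iff_getElem.1 hp _ _ hx' hy' h
  rwa [List.getElem_idxOf, List.getElem_idxOf] at this

theorem stmt_7 {V : Type*} [Fintype V] [DecidableEq V]
    (E T : Set (V × V))
    (hEloop : ∀ e ∈ E, e.1 ≠ e.2) (hTloop : ∀ e ∈ T, e.1 ≠ e.2)
    (hdisj : Disjoint E T) (hacyc : Acyclic E)
    (htot : ∀ u v : V, u ≠ v → (u, v) ∈ E ∪ T ∨ (v, u) ∈ E ∪ T)
    (T' : Set (V × V)) (hmax : IsMaxChild E T T') :
    IsStrictTotalOrder V (reaches (E ∪ T')) ∧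
    ∃! l : List V, IsTopOrder (E ∪ T') l := by
  set C := E ∪ T' with hC
  set r := reaches C with hr
  have hacC : Acyclic C := hmax.2.1
  have htrans : ∀ a b c, r a b → r b c → r a c := fun a b c h1 h2 => h1.trans h2
  have hirr : ∀ a, ¬ r a a := hacC
  -- totality
  have key : ∀ x y : V, x ≠ y → (x, y) ∈ E ∪ T → r x y ∨ r y x := by
    intro x y hxy hmem
    rcases hmem with h | h
    · exact Or.inl (Relation.TransGen.single (Or.inl h))
    · by_cases h' : (x, y) ∈ T'
      · exact Or.inl (Relation.TransGen.single (Or.inr h'))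
      · obtain ⟨w, hw⟩ := hmax.2.2 (x, y) ⟨h, h'⟩
        rcases split_lemma C x y w w hw with hc | ⟨h1, h2⟩
        · exact absurd hc (hacC w)
        · have hyx : Relation.ReflTransGen (fun p q => (p, q) ∈ C) y x := h2.trans h1
          rcases Relation.reflTransGen_iff_eq_or_transGen.1 hyx with rfl | htg
          · exact absurd rfl hxy
          · exact Or.inr htg
  have htotal : ∀ a b : V, a ≠ b → r a b ∨ r b a := by
    intro a b hab
    rcases htot a b hab with h | h
    · exact key a b hab h
    · exact (key b a hab.symm h).symm
  have htri : ∀ a b : V, r a b ∨ a = b ∨ r b a := by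
    intro a b
    by_cases hab : a = b
    · exact Or.inr (Or.inl hab)
    · rcases htotal a b hab with h | h
      · exact Or.inl h
      · exact Or.inr (Or.inr h)
  haveI hIrr : IsIrrefl V r := ⟨hirr⟩
  haveI hTr : IsTrans V r := ⟨htrans⟩
  haveI hTri : IsTrichotomous V r := ⟨fun a b h1 h2 => ((htri a b).resolve_left h1).resolve_right h2⟩
  haveI hSTO : IsStrictTotalOrder V r := { }
  haveI hAnti : IsAntisymm V r := ⟨fun a b h1 h2 => absurd (htrans a b a h1 h2) (hirr a)⟩
  refine ⟨hSTO, ?_⟩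
  -- any top order is pairwise-sorted by r
  have hmono : ∀ l : List V, IsTopOrder C l → ∀ x y, r x y → l.idxOf x < l.idxOf y := by
    intro l hl x y hxy
    induction hxy with
    | single h => exact hl.2.2 _ h
    | tail _ h ih => exact ih.trans (hl.2.2 _ h)
  have hsorted : ∀ l : List V, IsTopOrder C l → List.Pairwise r l := by
    intro l hl
    refine List.pairwise_iff_getElem.2 fun i j hi hj hij => ?_
    have hne : l[i] ≠ l[j] := by
      intro h
      exact absurd ((hl.1.getElem_inj_iff).1 h) (Nat.ne_of_lt hij)
    rcases htotal _ _ hne with h | h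
    · exact h
    · have := hmono l hl _ _ h
      rw [hl.1.idxOf_getElem, hl.1.idxOf_getElem] at this
      exact absurd hij (Nat.not_lt.2 (le_of_lt this))
  -- existence
  letI : DecidableRel r := fun a b => Classical.dec _
  letI lo : LinearOrder V := linearOrderOfSTO r
  set l₀ := Finset.sort (Finset.univ : Finset V) (· ≤ ·) with hl₀
  have hnd : l₀.Nodup := Finset.sort_nodup _ _
  have hmem : ∀ v : V, v ∈ l₀ := fun v => (Finset.mem_sort _).2 (Finset.mem_univ v)
  have hpw : List.Pairwise r l₀ := (Finset.sortedLT_sort _).pairwise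
  have htop₀ : IsTopOrder C l₀ := by
    refine ⟨hnd, hmem, fun e he => ?_⟩
    have hre : r e.1 e.2 := Relation.TransGen.single he
    have hne : e.1 ≠ e.2 := fun h => hirr e.1 (h ▸ hre)
    rcases lt_trichotomy (l₀.idxOf e.1) (l₀.idxOf e.2) with h | h | h
    · exact h
    · exact absurd ((List.idxOf_inj (hmem _)).1 h) hne
    · exact absurd (htrans _ _ _ hre (pairwise_of_indexOf hpw (hmem _) (hmem _) h)) (hirr e.1)
  refine ⟨l₀, htop₀, fun l hl => ?_⟩
  have hperm : List.Perm l l₀ := (List.perm_ext_iff_of_nodup hl.1 hnd).2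
    fun a => ⟨fun _ => hmem a, fun _ => hl.2.1 a⟩
  exact hperm.eq_of_pairwise' (hsorted l hl) (hsorted l₀ htop₀)
end

section
/- Let G_0=(V,E_0) be a finite acyclic digraph and let T_1, …, T_K ⊆ V×V be pairwise disjoint finite sets of edges, each disjoint from E_0. Then a digraph C is obtainable as C_K in some sequence C_0 = G_0, C_1, …, C_K where for each t ≤ K the graph C_t is a maximal child of (C_{t−1}, T_t), if and only if there exists a list L enumerating the edges of T_1 ∪ … ∪ T_K without repetition, in which every edge of T_i precedes every edge of T_j whenever i < j, such that the greedy insertion result of L starting from G_0 (adding each edge in order if and only if the graph stays acyclic) equals C. (This is the correctness of the tier-by-tier maximal-children search for parallel-universes ranked pairs.) -/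
/-- The digraph with edge set `C` is a maximal child of `((V,E), T)`. -/
def IsMaxChildGraph {V : Type*} (E T C : Set (V × V)) : Prop :=
  ∃ T' ⊆ T, C = E ∪ T' ∧ Acyclic C ∧ ∀ e ∈ T \ T', HasCycle (insert e C)

open Classical in
/-- Greedy insertion: process the edges of the list in order, adding each edge
if and only if the resulting graph is still acyclic. -/
noncomputable def greedy {V : Type*} (E : Set (V × V)) : List (V × V) → Set (V × V)
  | [] => E
  | e :: rest => greedy (if Acyclic (insert e E) then insert e E else E) rest

section IdxAux

variable {α : Type*} [BEq α] [LawfulBEq α]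

lemma idx_cons_self (a : α) (l : List α) : (a :: l).idxOf a = 0 := by
  simp [List.idxOf_cons]

lemma idx_cons_ne {a b : α} (h : b ≠ a) (l : List α) :
    (b :: l).idxOf a = l.idxOf a + 1 := by
  rw [List.idxOf_cons, beq_eq_false_iff_ne.mpr h]
  rfl

lemma idx_append_lt_length {a : α} {l₁ : List α} (l₂ : List α) (h : a ∈ l₁) :
    (l₁ ++ l₂).idxOf a < l₁.length := by
  induction l₁ with
  | nil => cases h
  | cons x rest ih =>
    rw [List.cons_append, List.idxOf_cons]
    cases hx : x == a with
    | true => simp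
    | false =>
      rcases List.mem_cons.mp h with rfl | h
      · simp at hx
      · simpa [Nat.succ_lt_succ_iff] using ih h

lemma length_le_idx_append {b : α} {l₁ : List α} (l₂ : List α) (h : b ∉ l₁) :
    l₁.length ≤ (l₁ ++ l₂).idxOf b := by
  induction l₁ with
  | nil => simp
  | cons x rest ih =>
    rw [List.cons_append, List.idxOf_cons,
      beq_eq_false_iff_ne.mpr (fun hxb => h (by rw [← hxb]; exact List.mem_cons_self))]
    simpa using Nat.succ_le_succ (ih (fun hb => h (List.mem_cons_of_mem _ hb)))

lemma idx_append_lt {a b : α} {l₁ l₂ : List α} (ha : a ∈ l₁) (hb : b ∉ l₁) :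
    (l₁ ++ l₂).idxOf a < (l₁ ++ l₂).idxOf b :=
  lt_of_lt_of_le (idx_append_lt_length l₂ ha) (length_le_idx_append l₂ hb)

lemma filter_split (p q : α → Bool) (l : List α)
    (hnd : l.Nodup) (hdisj : ∀ x ∈ l, ¬(p x = true ∧ q x = true))
    (hord : ∀ a ∈ l, ∀ b ∈ l, p a = true → q b = true → l.idxOf a < l.idxOf b) :
    l.filter (fun x => p x || q x) = l.filter p ++ l.filter q := by
  induction l with
  | nil => simp
  | cons x rest ih =>
    have hndr : rest.Nodup := (List.nodup_cons.mp hnd).2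
    have hxr : x ∉ rest := (List.nodup_cons.mp hnd).1
    have hordr : ∀ a ∈ rest, ∀ b ∈ rest, p a = true → q b = true →
        rest.idxOf a < rest.idxOf b := by
      intro a ha b hb hpa hqb
      have h := hord a (List.mem_cons_of_mem _ ha) b (List.mem_cons_of_mem _ hb) hpa hqb
      have hax : x ≠ a := fun h' => hxr (h' ▸ ha)
      have hbx : x ≠ b := fun h' => hxr (h' ▸ hb)
      rw [idx_cons_ne hax, idx_cons_ne hbx] at h
      omega
    have hdisjr : ∀ y ∈ rest, ¬(p y = true ∧ q y = true) :=
      fun y hy => hdisj y (List.mem_cons_of_mem _ hy)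
    by_cases hq : q x = true
    · have hp : p x ≠ true := fun hp => hdisj x (List.mem_cons_self) ⟨hp, hq⟩
      have hnop : ∀ a ∈ rest, ¬ (p a = true) := by
        intro a ha hpa
        have h := hord a (List.mem_cons_of_mem _ ha) x (List.mem_cons_self) hpa hq
        rw [idx_cons_self] at h
        omega
      have hfp : (x :: rest).filter p = [] := by
        rw [List.filter_eq_nil_iff]
        intro a ha
        rcases List.mem_cons.mp ha with rfl | ha
        · exact hp
        · exact hnop a ha
      have hfpq : (x :: rest).filter (fun y => p y || q y) = (x :: rest).filter q := by
        apply List.filter_congr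
        intro y hy
        show (p y || q y) = q y
        rcases List.mem_cons.mp hy with h | h
        · subst h
          rw [hq, Bool.or_true]
        · have hpy : p y = false := Bool.not_eq_true _ ▸ eq_false_of_ne_true (hnop y h)
          rw [hpy, Bool.false_or]
      rw [hfpq, hfp, List.nil_append]
    · by_cases hp : p x = true
      · rw [List.filter_cons_of_pos (by simp [hp]), List.filter_cons_of_pos hp,
          List.filter_cons_of_neg (by simp [hq]), ih hndr hdisjr hordr, List.cons_append]
      · rw [List.filter_cons_of_neg (by simp [hp, hq]), List.filter_cons_of_neg (by simp [hp]),
          List.filter_cons_of_neg (by simp [hq]), ih hndr hdisjr hordr]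

end IdxAux

section Aux

variable {V : Type*}

lemma reaches_mono {E F : Set (V × V)} (h : E ⊆ F) {u v : V} (hr : reaches E u v) :
    reaches F u v :=
  Relation.TransGen.mono (r := fun a b => (a, b) ∈ E) (fun a b hab => h hab) u v hr

lemma acyclic_mono {E F : Set (V × V)} (h : E ⊆ F) (hF : Acyclic F) : Acyclic E :=
  fun v hv => hF v (reaches_mono h hv)

lemma hasCycle_mono {E F : Set (V × V)} (h : E ⊆ F) (hE : HasCycle E) : HasCycle F := by
  obtain ⟨v, hv⟩ := hE; exact ⟨v, reaches_mono h hv⟩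

lemma hasCycle_iff_not_acyclic {E : Set (V × V)} : HasCycle E ↔ ¬ Acyclic E := by
  simp [HasCycle, Acyclic]

lemma greedy_nil (E : Set (V × V)) : greedy E [] = E := rfl

lemma greedy_cons_pos {E : Set (V × V)} {e : V × V} (rest : List (V × V))
    (h : Acyclic (insert e E)) : greedy E (e :: rest) = greedy (insert e E) rest := by
  simp only [greedy]
  rw [if_pos h]

lemma greedy_cons_neg {E : Set (V × V)} {e : V × V} (rest : List (V × V))
    (h : ¬ Acyclic (insert e E)) : greedy E (e :: rest) = greedy E rest := by
  simp only [greedy]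
  rw [if_neg h]

lemma greedy_append (E : Set (V × V)) (l₁ l₂ : List (V × V)) :
    greedy E (l₁ ++ l₂) = greedy (greedy E l₁) l₂ := by
  induction l₁ generalizing E with
  | nil => simp [greedy_nil]
  | cons e rest ih =>
    rw [List.cons_append]
    by_cases h : Acyclic (insert e E)
    · rw [greedy_cons_pos (rest ++ l₂) h, greedy_cons_pos rest h, ih]
    · rw [greedy_cons_neg (rest ++ l₂) h, greedy_cons_neg rest h, ih]

lemma subset_greedy (E : Set (V × V)) (l : List (V × V)) : E ⊆ greedy E l := by
  induction l generalizing E with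
  | nil => exact subset_rfl
  | cons e rest ih =>
    by_cases h : Acyclic (insert e E)
    · rw [greedy_cons_pos rest h]
      exact (Set.subset_insert _ _).trans (ih _)
    · rw [greedy_cons_neg rest h]
      exact ih _

lemma greedy_subset (E : Set (V × V)) (l : List (V × V)) :
    greedy E l ⊆ E ∪ {x | x ∈ l} := by
  induction l generalizing E with
  | nil => simp [greedy_nil]
  | cons e rest ih =>
    have hsub : ∀ (E' : Set (V × V)), E' ⊆ insert e E →
        greedy E' rest ⊆ E ∪ {x | x ∈ e :: rest} := by
      intro E' hE'
      refine (ih E').trans ?_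
      intro x hx
      rcases hx with hx | hx
      · rcases hE' hx with rfl | hx
        · exact Or.inr (by simp)
        · exact Or.inl hx
      · exact Or.inr (by simp only [List.mem_cons, Set.mem_setOf_eq] at hx ⊢; exact Or.inr hx)
    by_cases h : Acyclic (insert e E)
    · rw [greedy_cons_pos rest h]; exact hsub _ subset_rfl
    · rw [greedy_cons_neg rest h]; exact hsub _ (Set.subset_insert _ _)

lemma greedy_acyclic {E : Set (V × V)} (hE : Acyclic E) (l : List (V × V)) :
    Acyclic (greedy E l) := by
  induction l generalizing E with
  | nil => exact hE
  | cons e rest ih =>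
    by_cases h : Acyclic (insert e E)
    · rw [greedy_cons_pos rest h]; exact ih h
    · rw [greedy_cons_neg rest h]; exact ih hE

lemma greedy_full {E : Set (V × V)} {l : List (V × V)}
    (h : Acyclic (E ∪ {x | x ∈ l})) : greedy E l = E ∪ {x | x ∈ l} := by
  induction l generalizing E with
  | nil => simp [greedy_nil]
  | cons e rest ih =>
    have hins : Acyclic (insert e E) := by
      refine acyclic_mono ?_ h
      intro x hx
      rcases hx with rfl | hx
      · exact Or.inr (by simp)
      · exact Or.inl hx
    rw [greedy_cons_pos rest hins]
    have heq : insert e E ∪ {x | x ∈ rest} = E ∪ {x | x ∈ e :: rest} := by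
      ext x
      simp only [Set.mem_union, Set.mem_insert_iff, Set.mem_setOf_eq, List.mem_cons]
      tauto
    rw [ih (by rw [heq]; exact h), heq]

lemma greedy_skip {E : Set (V × V)} {l : List (V × V)} {e : V × V}
    (he : e ∈ l) (hne : e ∉ greedy E l) : HasCycle (insert e (greedy E l)) := by
  induction l generalizing E with
  | nil => cases he
  | cons f rest ih =>
    rcases List.mem_cons.mp he with rfl | he
    · by_cases hA : Acyclic (insert e E)
      · rw [greedy_cons_pos rest hA] at hne
        exact absurd (subset_greedy _ _ (Set.mem_insert _ _)) hne
      · rw [greedy_cons_neg rest hA] at hne ⊢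
        rw [hasCycle_iff_not_acyclic]
        intro hAc
        exact hA (acyclic_mono (Set.insert_subset_insert (subset_greedy _ _)) hAc)
    · by_cases hA : Acyclic (insert f E)
      · rw [greedy_cons_pos rest hA] at hne ⊢; exact ih he hne
      · rw [greedy_cons_neg rest hA] at hne ⊢; exact ih he hne

lemma greedy_frozen {E : Set (V × V)} {l : List (V × V)}
    (h : ∀ e ∈ l, HasCycle (insert e E)) : greedy E l = E := by
  induction l with
  | nil => rfl
  | cons e rest ih =>
    rw [greedy_cons_neg rest
      (hasCycle_iff_not_acyclic.mp (h e (List.mem_cons_self)))]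
    exact ih (fun f hf => h f (List.mem_cons_of_mem _ hf))

lemma maxchild_of_greedy {E Tt : Set (V × V)} (hA : Acyclic E) {l : List (V × V)}
    (hmem : ∀ e, e ∈ l ↔ e ∈ Tt) : IsMaxChildGraph E Tt (greedy E l) := by
  refine ⟨Tt ∩ greedy E l, Set.inter_subset_left, ?_, greedy_acyclic hA l, ?_⟩
  · apply Set.Subset.antisymm
    · intro x hx
      rcases greedy_subset E l hx with hE | hl
      · exact Or.inl hE
      · exact Or.inr ⟨(hmem x).mp hl, hx⟩
    · exact Set.union_subset (subset_greedy E l) Set.inter_subset_right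
  · intro e he
    rcases he with ⟨heT, heT'⟩
    have hel : e ∈ l := (hmem e).mpr heT
    have hne : e ∉ greedy E l := fun h => heT' ⟨heT, h⟩
    exact greedy_skip hel hne

lemma exists_list_of_maxchild [Fintype V] [DecidableEq V]
    {E Tt Ct : Set (V × V)} (hMC : IsMaxChildGraph E Tt Ct) :
    ∃ l : List (V × V), l.Nodup ∧ (∀ e, e ∈ l ↔ e ∈ Tt) ∧ greedy E l = Ct := by
  classical
  obtain ⟨T', hT'sub, hCeq, hCacyc, hmax⟩ := hMC
  set l₁ := (Set.toFinite T').toFinset.toList with hl₁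
  set l₂ := (Set.toFinite (Tt \ T')).toFinset.toList with hl₂
  have hml₁ : ∀ e, e ∈ l₁ ↔ e ∈ T' := by
    intro e; rw [hl₁, Finset.mem_toList, Set.Finite.mem_toFinset]
  have hml₂ : ∀ e, e ∈ l₂ ↔ e ∈ Tt \ T' := by
    intro e; rw [hl₂, Finset.mem_toList, Set.Finite.mem_toFinset]
  refine ⟨l₁ ++ l₂, ?_, ?_, ?_⟩
  · refine List.Nodup.append (Finset.nodup_toList _) (Finset.nodup_toList _) ?_
    intro a ha hb
    exact ((hml₂ a).mp hb).2 ((hml₁ a).mp ha)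
  · intro e
    simp only [List.mem_append, hml₁, hml₂]
    constructor
    · rintro (h | h)
      · exact hT'sub h
      · exact h.1
    · intro h
      by_cases h' : e ∈ T'
      · exact Or.inl h'
      · exact Or.inr ⟨h, h'⟩
  · rw [greedy_append]
    have h1 : greedy E l₁ = Ct := by
      have heq : E ∪ {x | x ∈ l₁} = Ct := by
        rw [hCeq]; ext x; simp [hml₁ x]
      rw [greedy_full (by rw [heq]; exact hCacyc), heq]
    rw [h1]
    exact greedy_frozen (fun e he => hmax e ((hml₂ e).mp he))

end Aux

theorem stmt_10 {V : Type*} [Fintype V] [DecidableEq V]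
    (E₀ : Set (V × V)) (K : ℕ) (T : ℕ → Set (V × V))
    (hE₀loop : ∀ e ∈ E₀, e.1 ≠ e.2)
    (hTloop : ∀ t, 1 ≤ t → t ≤ K → ∀ e ∈ T t, e.1 ≠ e.2)
    (hdisjE : ∀ t, 1 ≤ t → t ≤ K → Disjoint E₀ (T t))
    (hdisjT : ∀ s t, 1 ≤ s → s < t → t ≤ K → Disjoint (T s) (T t))
    (hacyc : Acyclic E₀) (C : Set (V × V)) :
    (∃ Cs : ℕ → Set (V × V), Cs 0 = E₀ ∧
        (∀ t, 1 ≤ t → t ≤ K → IsMaxChildGraph (Cs (t - 1)) (T t) (Cs t)) ∧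
        Cs K = C) ↔
    (∃ L : List (V × V), L.Nodup ∧
        (∀ e : V × V, e ∈ L ↔ ∃ t, 1 ≤ t ∧ t ≤ K ∧ e ∈ T t) ∧
        (∀ s t, 1 ≤ s → s < t → t ≤ K →
          ∀ a ∈ T s, ∀ b ∈ T t, L.idxOf a < L.idxOf b) ∧
        greedy E₀ L = C) := by
  classical
  constructor
  · rintro ⟨Cs, hCs0, hCsmax, hCsK⟩
    have hex : ∀ t, ∃ l : List (V × V), 1 ≤ t → t ≤ K →
        l.Nodup ∧ (∀ e, e ∈ l ↔ e ∈ T t) ∧ greedy (Cs (t - 1)) l = Cs t := by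
      intro t
      by_cases h1 : 1 ≤ t
      · by_cases h2 : t ≤ K
        · obtain ⟨l, hl⟩ := exists_list_of_maxchild (hCsmax t h1 h2)
          exact ⟨l, fun _ _ => hl⟩
        · exact ⟨[], fun _ h => absurd h h2⟩
      · exact ⟨[], fun h _ => absurd h h1⟩
    choose Ls hLs using hex
    set F : ℕ → List (V × V) := fun n => Nat.rec [] (fun t ih => ih ++ Ls (t + 1)) n
      with hF
    have hFsucc : ∀ t, F (t + 1) = F t ++ Ls (t + 1) := fun t => rfl
    have hFmem : ∀ t, t ≤ K → ∀ e, e ∈ F t ↔ ∃ s, 1 ≤ s ∧ s ≤ t ∧ e ∈ T s := by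
      intro t
      induction t with
      | zero =>
        intro _ e
        show e ∈ ([] : List (V × V)) ↔ _
        simp only [List.not_mem_nil, false_iff]
        rintro ⟨s, h1, h2, _⟩
        omega
      | succ t ih =>
        intro htK e
        rw [hFsucc, List.mem_append, ih (by omega)]
        rw [(hLs (t + 1) (by omega) htK).2.1 e]
        constructor
        · rintro (⟨s, h1, h2, h3⟩ | h)
          · exact ⟨s, h1, by omega, h3⟩
          · exact ⟨t + 1, by omega, le_rfl, h⟩
        · rintro ⟨s, h1, h2, h3⟩
          rcases Nat.lt_or_ge s (t + 1) with h | h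
          · exact Or.inl ⟨s, h1, by omega, h3⟩
          · have hst : s = t + 1 := by omega
            exact Or.inr (hst ▸ h3)
    have hFnd : ∀ t, t ≤ K → (F t).Nodup := by
      intro t
      induction t with
      | zero => intro _; exact List.nodup_nil
      | succ t ih =>
        intro htK
        rw [hFsucc]
        refine List.Nodup.append (ih (by omega)) ((hLs (t + 1) (by omega) htK).1) ?_
        intro a haF haL
        obtain ⟨s, hs1, hs2, hsT⟩ := (hFmem t (by omega) a).mp haF
        have haT : a ∈ T (t + 1) := ((hLs (t + 1) (by omega) htK).2.1 a).mp haL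
        exact (hdisjT s (t + 1) hs1 (by omega) htK).ne_of_mem hsT haT rfl
    have hFg : ∀ t, t ≤ K → greedy E₀ (F t) = Cs t := by
      intro t
      induction t with
      | zero =>
        intro _
        rw [hCs0]
        exact greedy_nil E₀
      | succ t ih =>
        intro htK
        rw [hFsucc, greedy_append, ih (by omega)]
        have h := (hLs (t + 1) (by omega) htK).2.2
        simpa using h
    have hFpre : ∀ m n, m ≤ n → ∃ r, F n = F m ++ r := by
      intro m n hmn
      induction n with
      | zero =>
        have hm : m = 0 := by omega
        exact ⟨[], by rw [hm, List.append_nil]⟩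
      | succ n ih =>
        rcases Nat.lt_or_ge m (n + 1) with h | h
        · obtain ⟨r, hr⟩ := ih (by omega)
          exact ⟨r ++ Ls (n + 1), by rw [hFsucc, hr, List.append_assoc]⟩
        · have hm : m = n + 1 := by omega
          exact ⟨[], by rw [hm, List.append_nil]⟩
    refine ⟨F K, hFnd K le_rfl, fun e => hFmem K le_rfl e, ?_, hFg K le_rfl ▸ hCsK⟩
    intro s t hs hst htK a haT b hbT
    have ht1 : 1 ≤ t := by omega
    obtain ⟨r, hr⟩ := hFpre (t - 1) K (by omega)
    have haF : a ∈ F (t - 1) := (hFmem (t - 1) (by omega) a).mpr ⟨s, hs, by omega, haT⟩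
    have hbF : b ∉ F (t - 1) := by
      intro hb
      obtain ⟨u, hu1, hu2, huT⟩ := (hFmem (t - 1) (by omega) b).mp hb
      exact (hdisjT u t hu1 (by omega) htK).ne_of_mem huT hbT rfl
    rw [hr]
    exact idx_append_lt haF hbF
  · rintro ⟨L, hLnd, hLmem, hLord, hLg⟩
    set Lt : ℕ → List (V × V) := fun t => L.filter (fun e => decide (e ∈ T t)) with hLt
    set G : ℕ → List (V × V) := fun n => Nat.rec [] (fun t ih => ih ++ Lt (t + 1)) n
      with hG
    have hGsucc : ∀ t, G (t + 1) = G t ++ Lt (t + 1) := fun t => rfl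
    have hGfilter : ∀ t, t ≤ K →
        G t = L.filter (fun e => decide (∃ s, 1 ≤ s ∧ s ≤ t ∧ e ∈ T s)) := by
      intro t
      induction t with
      | zero =>
        intro _
        show ([] : List (V × V)) = _
        symm
        rw [List.filter_eq_nil_iff]
        intro a _
        simp only [decide_eq_true_eq]
        rintro ⟨s, h1, h2, _⟩
        omega
      | succ t ih =>
        intro htK
        rw [hGsucc, ih (by omega)]
        have hsplit := filter_split (fun e => decide (∃ s, 1 ≤ s ∧ s ≤ t ∧ e ∈ T s))
          (fun e => decide (e ∈ T (t + 1))) L hLnd ?_ ?_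
        · rw [← hsplit]
          apply List.filter_congr
          intro x _
          show (decide (∃ s, 1 ≤ s ∧ s ≤ t ∧ x ∈ T s) || decide (x ∈ T (t + 1)))
              = decide (∃ s, 1 ≤ s ∧ s ≤ t + 1 ∧ x ∈ T s)
          rw [← Bool.decide_or]
          apply decide_eq_decide.mpr
          constructor
          · rintro (⟨s, h1, h2, h3⟩ | h)
            · exact ⟨s, h1, by omega, h3⟩
            · exact ⟨t + 1, by omega, le_rfl, h⟩
          · rintro ⟨s, h1, h2, h3⟩
            rcases Nat.lt_or_ge s (t + 1) with h | h
            · exact Or.inl ⟨s, h1, by omega, h3⟩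
            · have hst : s = t + 1 := by omega
              exact Or.inr (hst ▸ h3)
        · intro x _
          simp only [decide_eq_true_eq]
          rintro ⟨⟨s, h1, h2, h3⟩, h4⟩
          exact (hdisjT s (t + 1) h1 (by omega) htK).ne_of_mem h3 h4 rfl
        · intro a _ b _ hpa hqb
          simp only [decide_eq_true_eq] at hpa hqb
          obtain ⟨s, h1, h2, h3⟩ := hpa
          exact hLord s (t + 1) h1 (by omega) htK a h3 b hqb
    refine ⟨fun n => greedy E₀ (G n), rfl, fun t ht1 htK => ?_, ?_⟩
    · show IsMaxChildGraph (greedy E₀ (G (t - 1))) (T t) (greedy E₀ (G t))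
      have heq : G t = G (t - 1) ++ Lt t := by
        have h : t = (t - 1) + 1 := by omega
        rw [h, hGsucc, ← h]
      rw [heq, greedy_append]
      apply maxchild_of_greedy (greedy_acyclic hacyc _)
      intro e
      rw [hLt]
      simp only [List.mem_filter, decide_eq_true_eq]
      constructor
      · rintro ⟨_, h⟩; exact h
      · intro h
        exact ⟨(hLmem e).mpr ⟨t, ht1, htK, h⟩, h⟩
    · show greedy E₀ (G K) = C
      have hGL : G K = L := by
        rw [hGfilter K le_rfl]
        apply List.filter_eq_self.mpr
        intro a ha
        simp only [decide_eq_true_eq]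
        exact (hLmem a).mp ha
      rw [hGL, hLg]
end
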